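/- If a binary string T of length n contains exactly s occurrences of the symbol 1, then the number of factors z in the greedy LZ77 factorization of T satisfies z ≤ 3s + 2. -/

import Mathlib

/-- `S` occurs in `T` starting at (0-indexed) position `i`. -/
def OccursAt {α : Type*} (T S : List α) (i : ℕ) : Prop :=
  i + S.length ≤ T.length ∧ (T.drop i).take S.length = S

/-- `S` has an occurrence in `T` starting strictly before position `p`
(the occurrence may overlap position `p`). -/
def OccursBefore {α : Type*} (T S : List α) (p : ℕ) : Prop :=
  ∃ i, i < p ∧ OccursAt T S i

/-- `F` is the greedy LZ77 factor of `T` starting at position `p`: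
either the leftmost occurrence of a single symbol, or the longest substring
starting at `p` that occurs starting at an earlier position. -/
def LZ77Factor {α : Type*} (T : List α) (p : ℕ) (F : List α) : Prop :=
  F ≠ [] ∧ OccursAt T F p ∧
    ((∃ a, F = [a] ∧ a ∉ T.take p) ∨
      (OccursBefore T F p ∧
        ∀ F', OccursAt T F' p → OccursBefore T F' p → F'.length ≤ F.length))

/-- `fs` is the greedy LZ77 factorization of `T`. -/
def IsLZ77 {α : Type*} (T : List α) (fs : List (List α)) : Prop :=
  fs.flatten = T ∧
    ∀ k (hk : k < fs.length),
      LZ77Factor T (((fs.take k).map List.length).sum) (fs.get ⟨k, hk⟩)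

namespace LZAux

def pos (fs : List (List Bool)) (k : ℕ) : ℕ := ((fs.take k).map List.length).sum

lemma pos_succ (fs : List (List Bool)) (k : ℕ) (hk : k < fs.length) :
    pos fs (k + 1) = pos fs k + fs[k].length := by
  unfold pos
  rw [List.map_take, List.map_take, List.sum_take_succ _ k (by simpa using hk)]
  simp

lemma pos_le_succ (fs : List (List Bool)) (k : ℕ) : pos fs k ≤ pos fs (k + 1) := by
  unfold pos
  rw [List.take_succ]
  cases h : fs[k]? <;> simp [h]

lemma pos_mono (fs : List (List Bool)) : Monotone (pos fs) :=
  monotone_nat_of_le_succ (pos_le_succ fs)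

lemma pos_length (fs : List (List Bool)) : pos fs fs.length = fs.flatten.length := by
  unfold pos
  rw [List.take_length, List.length_flatten]

lemma pos_le_total (fs : List (List Bool)) (k : ℕ) : pos fs k ≤ fs.flatten.length := by
  rcases le_total k fs.length with h | h
  · rw [← pos_length]; exact pos_mono fs h
  · unfold pos
    rw [List.take_of_length_le h, List.length_flatten]

lemma occursAt_getD {T F : List Bool} {p j : ℕ} (h : OccursAt T F p) (hj : j < F.length) :
    T.getD (p + j) false = F.getD j false := by
  obtain ⟨h1, h2⟩ := h
  have hpj : p + j < T.length := by omega
  rw [List.getD_eq_getElem _ _ hpj, List.getD_eq_getElem _ _ hj]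
  rw [List.getElem_of_eq h2.symm hj, List.getElem_take, List.getElem_drop]

/-- The crucial greedy lemma: a factor starting mid-zero-run covers the rest of the run. -/
lemma key {T : List Bool} {p : ℕ} {F : List Bool} (hF : LZ77Factor T p F)
    {e : ℕ} (hpe : p ≤ e) (he : e ≤ T.length) (hp : 0 < p)
    (hprev : T.getD (p - 1) false = false)
    (hzero : ∀ m, p ≤ m → m < e → T.getD m false = false) :
    e ≤ p + F.length := by
  rcases eq_or_lt_of_le hpe with rfl | hpe'
  · omega
  obtain ⟨hne, hocc, hcase⟩ := hF
  have hFlen : 0 < F.length := List.length_pos_iff.2 hne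
  have hTp : T.getD p false = false := hzero p le_rfl hpe'
  have hF0 : F.getD 0 false = false := by
    have := occursAt_getD hocc hFlen
    simpa using this.symm.trans hTp
  rcases hcase with ⟨a, rfl, hnotin⟩ | ⟨_, hmax⟩
  · -- single new symbol case is impossible: `false` already occurs at p-1
    exfalso
    apply hnotin
    have ha : a = false := by simpa using hF0
    subst ha
    have hplen : p ≤ T.length := by omega
    have h1 : p - 1 < (T.take p).length := by
      rw [List.length_take]; omega
    have : (T.take p)[p - 1] = false := by
      rw [List.getElem_take]
      have : T.getD (p - 1) false = T[p - 1] := List.getD_eq_getElem _ _ (by omega)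
      rw [← this, hprev]
    rw [← this]
    exact List.getElem_mem h1
  · -- greedy maximality with the zero run
    set m := e - p with hm
    have hZlen : (List.replicate m false).length = m := List.length_replicate
    have hoccZ : OccursAt T (List.replicate m false) p := by
      refine ⟨by omega, ?_⟩
      apply List.ext_getElem
      · rw [List.length_take, List.length_drop, hZlen]; omega
      · intro j h1 h2
        rw [List.getElem_take, List.getElem_drop, List.getElem_replicate]
        have hj : j < m := by simpa [hZlen] using h2
        have hb : p + j < T.length := by omega
        have := hzero (p + j) (by omega) (by omega)
        rw [List.getD_eq_getElem _ _ hb] at this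
        exact this
    have hoccZ' : OccursAt T (List.replicate m false) (p - 1) := by
      refine ⟨by omega, ?_⟩
      apply List.ext_getElem
      · rw [List.length_take, List.length_drop, hZlen]; omega
      · intro j h1 h2
        rw [List.getElem_take, List.getElem_drop, List.getElem_replicate]
        have hj : j < m := by simpa [hZlen] using h2
        have hb : p - 1 + j < T.length := by omega
        rcases Nat.eq_zero_or_pos j with rfl | hjpos
        · have := hprev
          rw [List.getD_eq_getElem _ _ (by omega : p - 1 < T.length)] at this
          simpa using this
        · have heq : p - 1 + j = p + (j - 1) := by omega
          have h3 : T.getD (p - 1 + j) false = false := by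
            rw [heq]; exact hzero _ (by omega) (by omega)
          rw [List.getD_eq_getElem _ _ hb] at h3
          exact h3
    have := hmax _ hoccZ ⟨p - 1, by omega, hoccZ'⟩
    rw [hZlen] at this
    omega

lemma card_true (l : List Bool) :
    ((Finset.range l.length).filter (fun i => l.getD i false = true)).card = l.count true := by
  induction l with
  | nil => simp
  | cons a t ih =>
    have hset : (Finset.range (a :: t).length).filter (fun i => (a :: t).getD i false = true)
        = (if a = true then ({0} : Finset ℕ) else ∅) ∪
          ((Finset.range t.length).filter (fun i => t.getD i false = true)).image (· + 1) := by
      ext x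
      cases x with
      | zero =>
        by_cases ha : a = true <;>
          simp [ha, List.getD_cons_zero, Finset.mem_union, Finset.mem_image]
      | succ m =>
        by_cases ha : a = true <;>
          simp [ha, List.getD_cons_succ, Nat.succ_lt_succ_iff, Finset.mem_union,
            Finset.mem_image]
    rw [hset, Finset.card_union_of_disjoint, Finset.card_image_of_injective _
      (add_left_injective 1)]
    · simp only [List.getD_eq_getElem?_getD] at ih
      by_cases ha : a = true <;> simp [ha, List.count_cons, ih] <;> omega
    · by_cases ha : a = true <;> simp [ha, Finset.disjoint_left]

end LZAux

open LZAux in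
theorem stmt0 (T : List Bool) (fs : List (List Bool)) (s : ℕ)
    (hs : T.count true = s) (h : IsLZ77 T fs) :
    fs.length ≤ 3 * s + 2 := by
  obtain ⟨hflat, hfac⟩ := h
  set n := T.length with hn
  set z := fs.length with hz
  have hposn : ∀ k, pos fs k ≤ n := fun k => by
    have := pos_le_total fs k; rw [hflat] at this; exact this
  have hne : ∀ k (hk : k < z), fs[k] ≠ [] := fun k hk => (hfac k hk).1
  have hstep : ∀ k (hk : k < z), pos fs (k + 1) = pos fs k + fs[k].length :=
    fun k hk => pos_succ fs k hk
  have hlt : ∀ k (hk : k < z), pos fs k < pos fs (k + 1) := by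
    intro k hk
    rw [hstep k hk]
    have := List.length_pos_iff.2 (hne k hk)
    omega
  have hsm : ∀ k k', k < k' → k' ≤ z → pos fs k < pos fs k' := by
    intro k k' hkk' hk'
    calc pos fs k < pos fs (k + 1) := hlt k (by omega)
    _ ≤ pos fs k' := pos_mono fs hkk'
  have hplen : pos fs z = n := by rw [pos_length fs, hflat]
  have hpn : ∀ k, k < z → pos fs k < n := by
    intro k hk
    rw [← hplen]
    exact hsm k z hk le_rfl
  -- the three classes
  set P1 : ℕ → Prop := fun k => T.getD (pos fs k) false = true with hP1
  set P2 : ℕ → Prop := fun k => pos fs k = 0 ∨ T.getD (pos fs k - 1) false = true with hP2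
  classical
  set A := (Finset.range z).filter P1 with hA
  set B := ((Finset.range z).filter (fun k => ¬ P1 k)).filter P2 with hB
  set C := ((Finset.range z).filter (fun k => ¬ P1 k)).filter (fun k => ¬ P2 k) with hC
  have hcard : A.card + (B.card + C.card) = z := by
    rw [hB, hC, Finset.card_filter_add_card_filter_not,
      hA, Finset.card_filter_add_card_filter_not, Finset.card_range]
  -- target finset of positions of ones
  set S1 := (Finset.range n).filter (fun i => T.getD i false = true) with hS1
  have hS1card : S1.card = s := by rw [hS1, hn, card_true, hs]
  -- |A| ≤ s
  have hAcard : A.card ≤ s := by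
    rw [← hS1card]
    apply Finset.card_le_card_of_injOn (fun k => pos fs k)
    · intro k hk
      simp only [Finset.mem_coe] at hk ⊢
      rw [hA, Finset.mem_filter, Finset.mem_range] at hk
      rw [hS1, Finset.mem_filter, Finset.mem_range]
      exact ⟨hpn k hk.1, hk.2⟩
    · intro k hk k' hk' hkk'
      rw [hA, Finset.coe_filter] at hk hk'
      simp only [Set.mem_setOf_eq, Finset.mem_range] at hk hk'
      by_contra hne'
      rcases lt_or_gt_of_ne hne' with hlt' | hlt'
      · exact absurd hkk' (hsm k k' hlt' (le_of_lt hk'.1)).ne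
      · exact absurd hkk'.symm (hsm k' k hlt' (le_of_lt hk.1)).ne
  -- |B| ≤ s + 1
  have hBcard : B.card ≤ s + 1 := by
    have : B.card ≤ (insert 0 (S1.image (· + 1))).card := by
      apply Finset.card_le_card_of_injOn (fun k => pos fs k)
      · intro k hk
        simp only [Finset.mem_coe] at hk ⊢
        rw [hB, Finset.mem_filter, Finset.mem_filter, Finset.mem_range] at hk
        obtain ⟨⟨hkz, _⟩, hk2⟩ := hk
        by_cases h0 : pos fs k = 0
        · rw [h0]; exact Finset.mem_insert_self 0 _
        · have htrue : T.getD (pos fs k - 1) false = true := by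
            rw [hP2] at hk2
            rcases hk2 with h0' | htrue
            · exact absurd h0' h0
            · exact htrue
          apply Finset.mem_insert_of_mem
          rw [Finset.mem_image]
          refine ⟨pos fs k - 1, ?_, ?_⟩
          · rw [hS1, Finset.mem_filter, Finset.mem_range]
            exact ⟨by have := hpn k hkz; omega, htrue⟩
          · omega
      · intro k hk k' hk' hkk'
        rw [hB, Finset.coe_filter] at hk hk'
        simp only [Set.mem_setOf_eq, Finset.mem_filter, Finset.mem_range] at hk hk'
        by_contra hne'
        rcases lt_or_gt_of_ne hne' with hlt' | hlt'
        · exact absurd hkk' (hsm k k' hlt' (le_of_lt hk'.1.1)).ne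
        · exact absurd hkk'.symm (hsm k' k hlt' (le_of_lt hk.1.1)).ne
    calc B.card ≤ (insert 0 (S1.image (· + 1))).card := this
    _ ≤ (S1.image (· + 1)).card + 1 := Finset.card_insert_le _ _
    _ ≤ S1.card + 1 := by have := Finset.card_image_le (s := S1) (f := (· + 1)); omega
    _ = s + 1 := by rw [hS1card]
  -- run-end function
  have hEex : ∀ k : ℕ, ∃ e, pos fs k ≤ e ∧ (e = n ∨ T.getD e false = true) :=
    fun k => ⟨n, hposn k, Or.inl rfl⟩
  set E : ℕ → ℕ := fun k => Nat.find (hEex k) with hE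
  have hEspec : ∀ k, pos fs k ≤ E k ∧ (E k = n ∨ T.getD (E k) false = true) :=
    fun k => Nat.find_spec (hEex k)
  have hEle : ∀ k, E k ≤ n := fun k => Nat.find_le ⟨hposn k, Or.inl rfl⟩
  have hEmin : ∀ k m, pos fs k ≤ m → m < E k → T.getD m false = false := by
    intro k m h1 h2
    have := Nat.find_min (hEex k) h2
    push_neg at this
    rcases (this h1) with ⟨_, h3⟩
    exact Bool.eq_false_iff.mpr (fun hc => h3 hc)
  -- key consequence for C
  have hCkey : ∀ k (hk : k ∈ C), E k ≤ pos fs (k + 1) := by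
    intro k hk
    rw [hC, Finset.mem_filter, Finset.mem_filter, Finset.mem_range] at hk
    obtain ⟨⟨hkz, hk1⟩, hk2⟩ := hk
    have hk0 : pos fs k ≠ 0 := fun h0 => hk2 (Or.inl h0)
    have hkprev : T.getD (pos fs k - 1) false ≠ true := fun h' => hk2 (Or.inr h')
    have hfa := hfac k hkz
    rw [List.get_eq_getElem] at hfa
    have := key hfa (hEspec k).1 (hEle k) (Nat.pos_of_ne_zero hk0)
      (Bool.eq_false_iff.mpr hkprev) (fun m h1 h2 => hEmin k m h1 h2)
    rw [hstep k hkz]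
    exact this
  have hCpos : ∀ k (hk : k ∈ C), pos fs k < E k := by
    intro k hk
    have hk' := hk
    rw [hC, Finset.mem_filter, Finset.mem_filter, Finset.mem_range] at hk'
    obtain ⟨⟨hkz, hk1⟩, _⟩ := hk'
    rcases lt_or_eq_of_le (hEspec k).1 with h | h
    · exact h
    · exfalso
      rcases (hEspec k).2 with h2 | h2
      · have := hpn k hkz; omega
      · exact hk1 (by rw [hP1]; show T.getD (pos fs k) false = true; rw [h]; exact h2)
  -- |C| ≤ s + 1
  have hCcard : C.card ≤ s + 1 := by
    have : C.card ≤ (insert n S1).card := by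
      apply Finset.card_le_card_of_injOn E
      · intro k hk
        simp only [Finset.mem_coe] at hk ⊢
        rcases (hEspec k).2 with h1 | h1
        · rw [h1]; exact Finset.mem_insert_self n _
        · apply Finset.mem_insert_of_mem
          rw [hS1, Finset.mem_filter, Finset.mem_range]
          have : E k ≠ n := by
            intro hcon
            rw [hcon] at h1
            -- T.getD n false = true but getD out of range gives false
            rw [List.getD_eq_default] at h1
            · exact Bool.false_ne_true h1
            · omega
          exact ⟨lt_of_le_of_ne (hEle k) this, h1⟩
      · intro k hk k' hk' hkk'
        by_contra hne'
        have main : ∀ a b, a ∈ C → b ∈ C → a < b → E a = E b → False := by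
          intro a b ha hb hab hEab
          have haz : a ∈ Finset.range z := by
            rw [hC, Finset.mem_filter, Finset.mem_filter] at ha; exact ha.1.1
          have hbz : b ∈ Finset.range z := by
            rw [hC, Finset.mem_filter, Finset.mem_filter] at hb; exact hb.1.1
          rw [Finset.mem_range] at haz hbz
          have h1 : E a ≤ pos fs (a + 1) := hCkey a ha
          have h2 : pos fs (a + 1) ≤ pos fs b := pos_mono fs (by omega)
          have h3 : pos fs b < E b := hCpos b hb
          omega
        rcases lt_or_gt_of_ne hne' with hlt' | hlt'
        · exact main k k' (by simpa using hk) (by simpa using hk') hlt' hkk'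
        · exact main k' k (by simpa using hk') (by simpa using hk) hlt' hkk'.symm
    calc C.card ≤ (insert n S1).card := this
    _ ≤ S1.card + 1 := Finset.card_insert_le _ _
    _ = s + 1 := by rw [hS1card]
  omega
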